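/- Let m ≥ 1, let P₁, …, P_s be polynomials in m variables with complex coefficients, let x = (x₁, …, x_m) ∈ ℝ^m, and let n be a positive integer. Suppose that for every nonnegative integer k and every j ∈ {1, …, s}, P_j(e^{i(kn+1)x₁}, …, e^{i(kn+1)x_m}) = 0. Then there exist an m×m integer matrix A, a vector ℓ ∈ ℝ^m all of whose coordinates are rational multiples of π, and a point z₀ ∈ ℝ^m, such that x ≡ A·z₀ + ℓ componentwise modulo 2π, and for every z ∈ ℝ^m and every j, P_j(e^{i(A·z + ℓ)₁}, …, e^{i(A·z + ℓ)_m}) = 0. -/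

import Mathlib

open Finset in
lemma vdm_aux (V : Finset ℂ) (e : ℂ → ℂ) (h0 : ∀ k : ℕ, ∑ w ∈ V, e w * w ^ k = 0) :
    ∀ w ∈ V, e w = 0 := by
  intro w₀ hw₀
  classical
  set p : Polynomial ℂ := ∏ w ∈ V.erase w₀, (Polynomial.X - Polynomial.C w) with hp
  have hsum : ∑ w ∈ V, e w * p.eval w = 0 := by
    have : ∀ w ∈ V, e w * p.eval w
        = ∑ k ∈ Finset.range (p.natDegree + 1), p.coeff k * (e w * w ^ k) := by
      intro w _
      rw [Polynomial.eval_eq_sum_range, Finset.mul_sum]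
      exact Finset.sum_congr rfl fun k _ => by ring
    rw [Finset.sum_congr rfl this, Finset.sum_comm]
    simp only [← Finset.mul_sum, h0, mul_zero, Finset.sum_const_zero]
  have hz : ∀ w ∈ V.erase w₀, e w * p.eval w = 0 := by
    intro w hw
    have : p.eval w = 0 := by
      rw [hp, Polynomial.eval_prod]
      exact Finset.prod_eq_zero hw (by simp)
    simp [this]
  rw [← Finset.add_sum_erase _ _ hw₀, Finset.sum_eq_zero hz, add_zero] at hsum
  have hpe : p.eval w₀ ≠ 0 := by
    rw [hp, Polynomial.eval_prod]
    refine Finset.prod_ne_zero_iff.2 fun w hw => ?_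
    simp only [Polynomial.eval_sub, Polynomial.eval_X, Polynomial.eval_C, sub_ne_zero]
    exact fun h => (Finset.mem_erase.1 hw).1 h.symm
  exact (mul_eq_zero.1 hsum).resolve_right hpe

open Finset in
lemma key_aux {ι : Type*} [DecidableEq ι] (S : Finset ι) (d f h : ι → ℂ)
    (hf : ∀ k : ℕ, ∑ u ∈ S, d u * f u ^ k = 0)
    (hh : ∀ u ∈ S, ∀ u' ∈ S, f u = f u' → h u = h u') :
    ∑ u ∈ S, d u * h u = 0 := by
  classical
  set V := S.image f with hV
  have hmaps : ∀ u ∈ S, f u ∈ V := fun u hu => Finset.mem_image_of_mem f hu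
  have fib : ∀ g : ι → ℂ, ∑ w ∈ V, ∑ u ∈ S.filter (fun u => f u = w), g u = ∑ u ∈ S, g u :=
    fun g => Finset.sum_fiberwise_of_maps_to hmaps g
  have he : ∀ w ∈ V, ∑ u ∈ S.filter (fun u => f u = w), d u = 0 := by
    refine vdm_aux V _ fun k => ?_
    have : ∀ w ∈ V, (∑ u ∈ S.filter (fun u => f u = w), d u) * w ^ k
        = ∑ u ∈ S.filter (fun u => f u = w), d u * f u ^ k := by
      intro w _
      rw [Finset.sum_mul]
      refine Finset.sum_congr rfl fun u hu => ?_
      rw [(Finset.mem_filter.1 hu).2]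
    rw [Finset.sum_congr rfl this, fib]
    exact hf k
  rw [← fib]
  refine Finset.sum_eq_zero fun w hw => ?_
  obtain ⟨u₀, hu₀S, hu₀⟩ := Finset.mem_image.1 hw
  have : ∀ u ∈ S.filter (fun u => f u = w), d u * h u = d u * h u₀ := by
    intro u hu
    obtain ⟨huS, hfu⟩ := Finset.mem_filter.1 hu
    rw [hh u huS u₀ hu₀S (hfu.trans hu₀.symm)]
  rw [Finset.sum_congr rfl this, ← Finset.sum_mul, he w hw, zero_mul]

lemma expprod {m : ℕ} (w : Fin m → ℝ) (u : Fin m →₀ ℕ) :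
    ∏ t, Complex.exp (Complex.I * (w t : ℂ)) ^ (u t)
      = Complex.exp (Complex.I * ((∑ t, (u t : ℝ) * w t : ℝ) : ℂ)) := by
  have : ∀ t : Fin m, Complex.exp (Complex.I * (w t : ℂ)) ^ (u t)
      = Complex.exp ((u t : ℂ) * (Complex.I * (w t : ℂ))) := fun t =>
    (Complex.exp_nat_mul _ (u t)).symm
  rw [Finset.prod_congr rfl fun t _ => this t, ← Complex.exp_sum]
  congr 1
  push_cast
  rw [Finset.mul_sum]
  exact Finset.sum_congr rfl fun t _ => by ring

lemma sum_dite_mem {α : Type*} [Fintype α] (I : Set α) [DecidablePred (· ∈ I)] [Fintype I]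
    (g : I → ℝ) :
    ∑ r : α, (if h : r ∈ I then g ⟨r, h⟩ else 0) = ∑ i : I, g i := by
  classical
  rw [← Finset.sum_filter_add_sum_filter_not Finset.univ (· ∈ I)]
  rw [Finset.sum_eq_zero (fun r hr => dif_neg (Finset.mem_filter.1 hr).2), add_zero]
  rw [Finset.sum_subtype (p := (· ∈ I)) (Finset.univ.filter (· ∈ I)) (by simp)
    (fun r => if h : r ∈ I then g ⟨r, h⟩ else 0)]
  exact Finset.sum_congr rfl fun i _ => dif_pos i.2

lemma int_of_den_dvd (D : ℤ) (q : ℚ) (h : (q.den : ℤ) ∣ D) : ∃ z : ℤ, (z : ℚ) = D * q := by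
  obtain ⟨e, he⟩ := h
  refine ⟨e * q.num, ?_⟩
  have hden : (q.den : ℚ) ≠ 0 := by exact_mod_cast q.den_ne_zero
  have hq : q = (q.num : ℚ) / (q.den : ℚ) := (Rat.num_div_den q).symm
  rw [he]
  push_cast
  nth_rewrite 3 [hq]
  field_simp

theorem rational_structure_of_zero_sets (m s : ℕ) (hm : 1 ≤ m)
    (P : Fin s → MvPolynomial (Fin m) ℂ) (x : Fin m → ℝ) (n : ℕ) (hn : 0 < n)
    (hzero : ∀ (k : ℕ) (j : Fin s),
      MvPolynomial.eval
        (fun t => Complex.exp (Complex.I * (((k * n + 1 : ℕ) : ℂ) * (x t : ℂ)))) (P j) = 0) :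
    ∃ (A : Matrix (Fin m) (Fin m) ℤ) (ℓ : Fin m → ℝ),
      (∀ j : Fin m, ∃ q : ℚ, ℓ j = (q : ℝ) * Real.pi) ∧
      (∃ z₀ : Fin m → ℝ, ∀ j : Fin m, ∃ c : ℤ,
        x j - ((∑ r : Fin m, (A j r : ℝ) * z₀ r) + ℓ j) = 2 * Real.pi * c) ∧
      (∀ (z : Fin m → ℝ) (j : Fin s),
        MvPolynomial.eval
          (fun t => Complex.exp
            (Complex.I * ((((∑ r : Fin m, (A t r : ℝ) * z r) + ℓ t : ℝ)) : ℂ))) (P j) = 0) := by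
  classical
  set Q : Submodule ℚ ℝ := Submodule.span ℚ {Real.pi} with hQ
  set v : Fin m → ℝ ⧸ Q := fun t => Q.mkQ (x t) with hv
  obtain ⟨I, hli, hmax⟩ := exists_maximal_linearIndepOn ℚ v
  haveI : Fintype I := (Set.toFinite I).fintype
  have hspan : ∀ t, v t ∈ Submodule.span ℚ (Set.range fun i : I => v i) := by
    intro t
    rw [← Set.image_eq_range]
    by_cases ht : t ∈ I
    · exact Submodule.subset_span ⟨t, ht, rfl⟩
    · obtain ⟨a, ha, hmem⟩ := hmax t ht
      have h2 := Submodule.smul_mem _ a⁻¹ hmem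
      rwa [inv_smul_smul₀ ha] at h2
  choose c hc using fun t => (Submodule.mem_span_range_iff_exists_fun ℚ).1 (hspan t)
  have hker : ∀ t, x t - (∑ i : I, c t i • x (i : Fin m)) ∈ Q := by
    intro t
    have h0 : Q.mkQ (x t - ∑ i : I, c t i • x (i : Fin m)) = 0 := by
      rw [map_sub, map_sum]
      simp only [map_smul]
      rw [hc t, sub_self]
    rwa [Submodule.mkQ_apply, Submodule.Quotient.mk_eq_zero] at h0
  choose ρ hρ using fun t => Submodule.mem_span_singleton.1 (hker t)
  -- denominators
  set D : ℤ := ∏ t : Fin m, ∏ i : I, ((c t i).den : ℤ) with hD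
  have hDpos : 0 < D :=
    Finset.prod_pos fun t _ => Finset.prod_pos fun i _ => by exact_mod_cast (c t i).den_pos
  have hDne : (D : ℝ) ≠ 0 := by exact_mod_cast hDpos.ne'
  have hdvd : ∀ t (i : I), ((c t i).den : ℤ) ∣ D := fun t i =>
    dvd_trans (Finset.dvd_prod_of_mem (fun i : I => ((c t i).den : ℤ)) (Finset.mem_univ i))
      (Finset.dvd_prod_of_mem (fun t => ∏ i : I, ((c t i).den : ℤ)) (Finset.mem_univ t))
  choose a ha using fun t (i : I) => int_of_den_dvd D (c t i) (hdvd t i)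
  -- data
  set A : Matrix (Fin m) (Fin m) ℤ := fun t r => if h : r ∈ I then a t ⟨r, h⟩ else 0 with hA
  set z₀ : Fin m → ℝ := fun r => x r / (D : ℝ) with hz₀
  set ℓ : Fin m → ℝ := fun t => (ρ t : ℝ) * Real.pi with hℓ
  have haR : ∀ t (i : I), (a t i : ℝ) = (D : ℝ) * (c t i : ℝ) := by
    intro t i; exact_mod_cast congrArg (Rat.cast : ℚ → ℝ) (ha t i)
  have hsum : ∀ t, ∑ r : Fin m, (A t r : ℝ) * z₀ r = ∑ i : I, (c t i : ℝ) * x (i : Fin m) := by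
    intro t
    have h1 : ∀ r : Fin m, (A t r : ℝ) * z₀ r
        = (if h : r ∈ I then (fun i : I => (c t i : ℝ) * x (i : Fin m)) ⟨r, h⟩ else 0) := by
      intro r
      by_cases h : r ∈ I
      · simp only [hA, dif_pos h]
        rw [haR t ⟨r, h⟩, hz₀]
        field_simp
      · simp [hA, dif_neg h]
    rw [Finset.sum_congr rfl fun r _ => h1 r]
    exact sum_dite_mem I (fun i => (c t i : ℝ) * x (i : Fin m))
  have hxd : ∀ t, x t = (∑ i : I, (c t i : ℝ) * x (i : Fin m)) + (ρ t : ℝ) * Real.pi := by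
    intro t
    have h2 := hρ t
    rw [Rat.smul_def] at h2
    have h3 : ∀ i : I, c t i • x (i : Fin m) = (c t i : ℝ) * x (i : Fin m) := fun i =>
      Rat.smul_def _ _
    rw [Finset.sum_congr rfl fun i _ => h3 i] at h2
    linarith [h2]
  have hx : ∀ t, x t = (∑ r : Fin m, (A t r : ℝ) * z₀ r) + ℓ t := by
    intro t
    rw [hsum t]
    have hℓt : ℓ t = (ρ t : ℝ) * Real.pi := rfl
    rw [hℓt]
    exact hxd t
  -- independence lemma
  have hind : ∀ δ : Fin m → ℤ, (∃ qq : ℚ, ∑ t, (δ t : ℝ) * x t = (qq : ℝ) * Real.pi) →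
      ∀ r, ∑ t, δ t * A t r = 0 := by
    intro δ ⟨qq, hqq⟩ r
    set β : I → ℚ := fun i => ∑ t, (δ t : ℚ) * c t i with hβ
    have e1 : ∑ t, (δ t : ℝ) * x t
        = (∑ i : I, (β i : ℝ) * x (i : Fin m)) + ((∑ t, (δ t : ℚ) * ρ t : ℚ) : ℝ) * Real.pi := by
      have e2 : ∀ t, (δ t : ℝ) * x t
          = (∑ i : I, ((δ t : ℝ) * (c t i : ℝ)) * x (i : Fin m))
            + ((δ t : ℝ) * (ρ t : ℝ)) * Real.pi := by
        intro t
        nth_rewrite 1 [hxd t]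
        rw [mul_add, Finset.mul_sum]
        congr 1
        · exact Finset.sum_congr rfl fun i _ => by ring
        · ring
      rw [Finset.sum_congr rfl fun t _ => e2 t, Finset.sum_add_distrib, Finset.sum_comm]
      congr 1
      · refine Finset.sum_congr rfl fun i _ => ?_
        rw [← Finset.sum_mul]
        congr 1
        rw [hβ]
        push_cast
        rfl
      · rw [← Finset.sum_mul]
        congr 1
        push_cast
        rfl
    have hβx : ∑ i : I, (β i : ℝ) * x (i : Fin m)
        = ((qq - ∑ t, (δ t : ℚ) * ρ t : ℚ) : ℝ) * Real.pi := by
      push_cast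
      push_cast at e1
      linarith [e1, hqq]
    -- image in quotient is zero
    have hβ0 : ∀ i, β i = 0 := by
      have hmem : (∑ i : I, β i • x (i : Fin m)) ∈ Q := by
        have : ∀ i : I, β i • x (i : Fin m) = (β i : ℝ) * x (i : Fin m) := fun i =>
          Rat.smul_def _ _
        rw [Finset.sum_congr rfl fun i _ => this i, hβx]
        exact Submodule.mem_span_singleton.2 ⟨qq - ∑ t, (δ t : ℚ) * ρ t, (Rat.smul_def _ _)⟩
      have hq0 : ∑ i : I, β i • v (i : Fin m) = 0 := by
        have : Q.mkQ (∑ i : I, β i • x (i : Fin m)) = 0 := by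
          rw [Submodule.mkQ_apply, Submodule.Quotient.mk_eq_zero]; exact hmem
        rw [map_sum] at this
        simpa only [map_smul] using this
      exact Fintype.linearIndependent_iff.1 hli β hq0
    by_cases hr : r ∈ I
    · have : ((∑ t, δ t * A t r : ℤ) : ℚ) = (D : ℚ) * β ⟨r, hr⟩ := by
        push_cast
        rw [hβ, Finset.mul_sum]
        refine Finset.sum_congr rfl fun t _ => ?_
        have hAv : A t r = a t ⟨r, hr⟩ := by rw [hA]; exact dif_pos hr
        rw [hAv, ha t ⟨r, hr⟩]
        ring
      rw [hβ0 ⟨r, hr⟩] at this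
      exact_mod_cast this.trans (mul_zero _)
    · refine Finset.sum_eq_zero fun t _ => ?_
      have : A t r = 0 := by rw [hA]; exact dif_neg hr
      rw [this, mul_zero]
  -- conclusion
  refine ⟨A, ℓ, fun j => ⟨ρ j, rfl⟩, ⟨z₀, fun j => ⟨0, by rw [← hx j]; simp⟩⟩, ?_⟩
  intro z j
  set Y : Fin m → ℝ := fun t => (∑ r, (A t r : ℝ) * z r) + ℓ t with hY
  set φ : (Fin m →₀ ℕ) → ℝ := fun u => ∑ t, (u t : ℝ) * x t with hφ
  set ψ : (Fin m →₀ ℕ) → ℝ := fun u => ∑ t, (u t : ℝ) * Y t with hψ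
  set S := (P j).support with hS
  set d : (Fin m →₀ ℕ) → ℂ := fun u => (P j).coeff u * Complex.exp (Complex.I * ((φ u : ℝ) : ℂ))
    with hd
  set f : (Fin m →₀ ℕ) → ℂ := fun u => Complex.exp (Complex.I * (((n : ℝ) * φ u : ℝ) : ℂ)) with hf
  set h : (Fin m →₀ ℕ) → ℂ := fun u => Complex.exp (Complex.I * ((ψ u - φ u : ℝ) : ℂ)) with hh
  -- hypothesis of key_aux
  have hfk : ∀ k : ℕ, ∑ u ∈ S, d u * f u ^ k = 0 := by
    intro k
    have h0 := hzero k j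
    rw [MvPolynomial.eval_eq'] at h0
    rw [← h0]
    refine Finset.sum_congr rfl fun u hu => ?_
    rw [hd]
    have hw : ∀ t, Complex.I * (((k * n + 1 : ℕ) : ℂ) * (x t : ℂ))
        = Complex.I * (((((k * n + 1 : ℕ) : ℝ) * x t : ℝ)) : ℂ) := by
      intro t; push_cast; ring
    have hprod : ∏ t, Complex.exp (Complex.I * (((k * n + 1 : ℕ) : ℂ) * (x t : ℂ))) ^ (u t)
        = Complex.exp (Complex.I
            * ((∑ t, (u t : ℝ) * (((k * n + 1 : ℕ) : ℝ) * x t) : ℝ) : ℂ)) := by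
      rw [Finset.prod_congr rfl fun t _ => by rw [hw t]]
      exact expprod (fun t => ((k * n + 1 : ℕ) : ℝ) * x t) u
    rw [hprod]
    have hsum2 : ∑ t, (u t : ℝ) * (((k * n + 1 : ℕ) : ℝ) * x t) = ((k * n + 1 : ℕ) : ℝ) * φ u := by
      rw [hφ, Finset.mul_sum]
      exact Finset.sum_congr rfl fun t _ => by ring
    rw [hsum2, hf]
    rw [← Complex.exp_nat_mul _ k, mul_comm (((P j).coeff u)) _, mul_assoc,
      mul_comm _ ((P j).coeff u), ← Complex.exp_add]
    congr 2
    push_cast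
    ring
  -- constancy on fibers
  have hhc : ∀ u ∈ S, ∀ u' ∈ S, f u = f u' → h u = h u' := by
    intro u _ u' _ hfe
    obtain ⟨k, hk⟩ := Complex.exp_eq_exp_iff_exists_int.1 hfe
    have hreal : (n : ℝ) * φ u = (n : ℝ) * φ u' + (k : ℝ) * (2 * Real.pi) := by
      have h2 : (((n : ℝ) * φ u : ℝ) : ℂ) = (((n : ℝ) * φ u' + (k : ℝ) * (2 * Real.pi) : ℝ) : ℂ) := by
        apply mul_left_cancel₀ Complex.I_ne_zero
        rw [hk]
        push_cast
        ring
      exact_mod_cast h2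
    set δ : Fin m → ℤ := fun t => (u t : ℤ) - (u' t : ℤ) with hδ
    have hqq : ∃ qq : ℚ, ∑ t, (δ t : ℝ) * x t = (qq : ℝ) * Real.pi := by
      refine ⟨(2 * k) / n, ?_⟩
      have hδx : ∑ t, (δ t : ℝ) * x t = φ u - φ u' := by
        rw [hφ, ← Finset.sum_sub_distrib]
        refine Finset.sum_congr rfl fun t _ => ?_
        rw [hδ]
        push_cast
        ring
      rw [hδx]
      have hnne : (n : ℝ) ≠ 0 := by exact_mod_cast hn.ne'
      push_cast
      field_simp
      linarith [hreal]
    have hA0 := hind δ hqq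
    -- ψ u - φ u = ψ u' - φ u'
    have hYx : ∀ t, Y t - x t = ∑ r, (A t r : ℝ) * (z r - z₀ r) := by
      intro t
      have hs : ∑ r, (A t r : ℝ) * (z r - z₀ r)
          = (∑ r, (A t r : ℝ) * z r) - ∑ r, (A t r : ℝ) * z₀ r := by
        rw [← Finset.sum_sub_distrib]
        exact Finset.sum_congr rfl fun r _ => by ring
      have hYt : Y t = (∑ r, (A t r : ℝ) * z r) + ℓ t := rfl
      rw [hs, hYt]
      nth_rewrite 1 [hx t]
      ring
    have hform : ∀ w : Fin m →₀ ℕ, ψ w - φ w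
        = ∑ r, (∑ t, (w t : ℝ) * (A t r : ℝ)) * (z r - z₀ r) := by
      intro w
      rw [hψ, hφ, ← Finset.sum_sub_distrib]
      have : ∀ t, (w t : ℝ) * Y t - (w t : ℝ) * x t
          = ∑ r, ((w t : ℝ) * (A t r : ℝ)) * (z r - z₀ r) := by
        intro t
        rw [← mul_sub, hYx t, Finset.mul_sum]
        exact Finset.sum_congr rfl fun r _ => by ring
      rw [Finset.sum_congr rfl fun t _ => this t, Finset.sum_comm]
      exact Finset.sum_congr rfl fun r _ => by rw [Finset.sum_mul]
    have hcoef : ∀ r, ∑ t, (u t : ℝ) * (A t r : ℝ) = ∑ t, (u' t : ℝ) * (A t r : ℝ) := by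
      intro r
      have h4 : ((∑ t, δ t * A t r : ℤ) : ℝ) = 0 := by rw [hA0 r]; simp
      push_cast at h4
      have : ∑ t, (u t : ℝ) * (A t r : ℝ) - ∑ t, (u' t : ℝ) * (A t r : ℝ)
          = ∑ t, ((u t : ℝ) - (u' t : ℝ)) * (A t r : ℝ) := by
        rw [← Finset.sum_sub_distrib]
        exact Finset.sum_congr rfl fun t _ => by ring
      have h5 : ∑ t, ((u t : ℝ) - (u' t : ℝ)) * (A t r : ℝ) = 0 := by
        rw [← h4]
        refine Finset.sum_congr rfl fun t _ => by rw [hδ]; push_cast; ring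
      linarith [this, h5]
    have hψeq : ψ u - φ u = ψ u' - φ u' := by
      rw [hform u, hform u']
      exact Finset.sum_congr rfl fun r _ => by rw [hcoef r]
    simp only [hh]
    rw [hψeq]
  -- final computation
  have hkey := key_aux S d f h hfk hhc
  rw [MvPolynomial.eval_eq']
  rw [← hkey]
  refine Finset.sum_congr rfl fun u hu => ?_
  have hprod : ∏ t, Complex.exp (Complex.I
        * ((((∑ r : Fin m, (A t r : ℝ) * z r) + ℓ t : ℝ)) : ℂ)) ^ (u t)
      = Complex.exp (Complex.I * ((ψ u : ℝ) : ℂ)) := by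
    rw [hψ]
    exact expprod Y u
  rw [hprod, hd, hh, mul_assoc, ← Complex.exp_add]
  congr 2
  push_cast
  ring
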